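/- Let Ξ : ℝ → H^m be a C¹ orthonormal frame (each Ξ_a(k) a unit vector, mutually orthogonal) satisfying the time-reversal symmetry Ξ_b(-k) = Σ_a [θΞ_a(k)]·ε_{ab} with θ antiunitary, θ² = -1, ε unitary. Define ω(k) := Σ_{a=1}^m ⟨Ξ_a(k), ∂ₖΞ_a(k)⟩. Then ω is an even function: ω(-k) = ω(k) for all k ∈ ℝ. -/

import Mathlib

/-- for a `C¹` orthonormal frame `Ξ` satisfying the time-reversal
symmetry `Ξ_b(-k) = Σ_a [θ Ξ_a(k)] ε_{ab}` with `θ` antiunitary, `θ² = -1`, and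
`ε` unitary, the function `ω(k) = Σ_a ⟪Ξ_a(k), ∂ₖΞ_a(k)⟫` is even. -/
theorem statement16 {H : Type*} [NormedAddCommGroup H] [InnerProductSpace ℂ H]
    {m : ℕ}
    (θ : H → H)
    (hadd : ∀ x y, θ (x + y) = θ x + θ y)
    (hsmul : ∀ (c : ℂ) (x : H), θ (c • x) = (starRingEnd ℂ c) • θ x)
    (hsurj : Function.Surjective θ)
    (hinner : ∀ x y, inner ℂ (θ x) (θ y) = inner ℂ y x)
    (hsq : ∀ x, θ (θ x) = -x)
    (ε : Matrix (Fin m) (Fin m) ℂ)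
    (hε : ε ∈ Matrix.unitaryGroup (Fin m) ℂ)
    (Ξ Ξ' : Fin m → ℝ → H)
    (hortho : ∀ (k : ℝ) (a b : Fin m),
      inner ℂ (Ξ a k) (Ξ b k) = if a = b then 1 else 0)
    (hderiv : ∀ a k, HasDerivAt (Ξ a) (Ξ' a k) k)
    (hTRS : ∀ (k : ℝ) (b : Fin m), Ξ b (-k) = ∑ a, ε a b • θ (Ξ a k)) :
    ∀ k : ℝ, ∑ a, inner ℂ (Ξ a (-k)) (Ξ' a (-k)) =
      ∑ a, inner ℂ (Ξ a k) (Ξ' a k) := by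
  intro k
  -- θ is an ℝ-linear isometry, hence a continuous ℝ-linear map
  have hnorm : ∀ x, ‖θ x‖ = ‖x‖ := by
    intro x
    have h := hinner x x
    rw [inner_self_eq_norm_sq_to_K, inner_self_eq_norm_sq_to_K] at h
    have h2 : (‖θ x‖ : ℝ) ^ 2 = ‖x‖ ^ 2 := by exact_mod_cast h
    nlinarith [norm_nonneg (θ x), norm_nonneg x]
  have hsmulR : ∀ (c : ℝ) (x : H), θ (c • x) = c • θ x := by
    intro c x
    have h := hsmul (c : ℂ) x
    rw [Complex.coe_smul] at h
    simpa using h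
  let Lθ : H →L[ℝ] H :=
    LinearMap.mkContinuous
      { toFun := θ, map_add' := hadd, map_smul' := hsmulR } 1
      (fun x => by simp [hnorm])
  have hθderiv : ∀ a (k : ℝ), HasDerivAt (fun t => θ (Ξ a t)) (θ (Ξ' a k)) k := by
    intro a k
    exact (Lθ.hasFDerivAt.comp_hasDerivAt k (hderiv a k))
  -- derivative of the TRS identity
  have hΞ'TRS : ∀ (b : Fin m), Ξ' b (-k) = -∑ a, ε a b • θ (Ξ' a k) := by
    intro b
    have h1 : HasDerivAt (fun t : ℝ => Ξ b (-t)) ((-1 : ℝ) • Ξ' b (-k)) k :=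
      (hderiv b (-k)).scomp k (hasDerivAt_neg k)
    have h2 : HasDerivAt (fun t : ℝ => Ξ b (-t)) (∑ a, ε a b • θ (Ξ' a k)) k := by
      have hs : HasDerivAt (fun t => ∑ a, ε a b • θ (Ξ a t)) (∑ a, ε a b • θ (Ξ' a k)) k :=
        HasDerivAt.fun_sum fun a _ => ((hθderiv a k).const_smul (ε a b))
      exact hs.congr_of_eventuallyEq (Filter.Eventually.of_forall fun t => hTRS t b)
    have h := h1.unique h2
    rw [neg_one_smul] at h
    exact neg_eq_iff_eq_neg.mp h
  -- skew-symmetry of the Berry connection from orthonormality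
  have hskew : ∀ a : Fin m, (inner ℂ (Ξ' a k) (Ξ a k) : ℂ) = -inner ℂ (Ξ a k) (Ξ' a k) := by
    intro a
    have h1 : HasDerivAt (fun t => (inner ℂ (Ξ a t) (Ξ a t) : ℂ))
        (inner ℂ (Ξ a k) (Ξ' a k) + inner ℂ (Ξ' a k) (Ξ a k)) k :=
      (hderiv a k).inner ℂ (hderiv a k)
    have h2 : HasDerivAt (fun t => (inner ℂ (Ξ a t) (Ξ a t) : ℂ)) 0 k := by
      have he : (fun t => (inner ℂ (Ξ a t) (Ξ a t) : ℂ)) = fun _ => 1 :=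
        funext fun t => by simpa using hortho t a a
      rw [he]; exact hasDerivAt_const _ _
    have h := h2.unique h1
    linear_combination -h
  -- unitarity of ε entrywise
  have hunit : ∀ a c : Fin m,
      (∑ b, ε c b * (starRingEnd ℂ) (ε a b)) = if c = a then 1 else 0 := by
    intro a c
    have h := Matrix.mem_unitaryGroup_iff.mp hε
    have h2 := congrArg (fun M => M c a) h
    simpa [Matrix.mul_apply, Matrix.one_apply, Matrix.conjTranspose_apply] using h2
  -- expand each term
  have hterm : ∀ b, (inner ℂ (Ξ b (-k)) (Ξ' b (-k)) : ℂ)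
      = -∑ a, ∑ c, (ε c b * (starRingEnd ℂ) (ε a b)) * inner ℂ (Ξ' c k) (Ξ a k) := by
    intro b
    rw [hTRS k b, hΞ'TRS b, inner_neg_right, sum_inner]
    congr 1
    refine Finset.sum_congr rfl fun a _ => ?_
    rw [inner_smul_left, inner_sum, Finset.mul_sum]
    refine Finset.sum_congr rfl fun c _ => ?_
    rw [inner_smul_right, hinner]
    ring
  have hswap : ∑ b, ∑ a, ∑ c, (ε c b * (starRingEnd ℂ) (ε a b)) * inner ℂ (Ξ' c k) (Ξ a k)
      = ∑ a, (inner ℂ (Ξ' a k) (Ξ a k) : ℂ) := by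
    rw [Finset.sum_comm]
    refine Finset.sum_congr rfl fun a _ => ?_
    rw [Finset.sum_comm]
    have hc : ∀ c : Fin m,
        ∑ b, (ε c b * (starRingEnd ℂ) (ε a b)) * inner ℂ (Ξ' c k) (Ξ a k)
        = (if c = a then 1 else 0) * inner ℂ (Ξ' c k) (Ξ a k) := fun c => by
      rw [← Finset.sum_mul, hunit a c]
    rw [Finset.sum_congr rfl fun c _ => hc c]
    simp
  calc ∑ b, (inner ℂ (Ξ b (-k)) (Ξ' b (-k)) : ℂ)
      = ∑ b, -∑ a, ∑ c, (ε c b * (starRingEnd ℂ) (ε a b)) * inner ℂ (Ξ' c k) (Ξ a k) :=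
        Finset.sum_congr rfl fun b _ => hterm b
    _ = -∑ a, (inner ℂ (Ξ' a k) (Ξ a k) : ℂ) := by
        rw [Finset.sum_neg_distrib, hswap]
    _ = ∑ a, (inner ℂ (Ξ a k) (Ξ' a k) : ℂ) := by
        rw [← Finset.sum_neg_distrib]
        exact Finset.sum_congr rfl fun a _ => by rw [hskew a, neg_neg]
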